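/- Let A^(1), ..., A^(N) be matrices with A^(n) of size I_n × R. Then the squared Frobenius norm of the Kruskal tensor admits the closed form ‖[[A^(1),...,A^(N)]]‖_F² = 1_R^T (⊛_n (A^(n)T A^(n))) 1_R = Σ_{r=1}^R Σ_{s=1}^R ∏_{n=1}^N (A^(n)T A^(n))_{r s}, i.e., it equals the generalized inner product ⟨A^(1)T A^(1), ..., A^(N)T A^(N)⟩ of the N Gram matrices. -/

import Mathlib

open scoped BigOperators Matrix
open Finset Matrix

/-- Iterated Hadamard (entrywise) product of a family of matrices. -/
def hadPi {ι : Type*} [Fintype ι] {α β : Type*}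
    (M : ι → Matrix α β ℝ) : Matrix α β ℝ :=
  fun a b => ∏ n, M n a b

/-- Outer product of `N` vectors, as a tensor indexed by multi-indices. -/
def outerProd {ι : Type*} [Fintype ι] {I : ι → ℕ}
    (u : (n : ι) → Fin (I n) → ℝ) : ((n : ι) → Fin (I n)) → ℝ :=
  fun i => ∏ n, u n (i n)

/-- Kruskal operator: the tensor `[[A⁽¹⁾, …, A⁽ᴺ⁾]] = ∑ᵣ a⁽¹⁾₊ᵣ ∘ ⋯ ∘ a⁽ᴺ⁾₊ᵣ`. -/
def kruskal {ι : Type*} [Fintype ι] {I : ι → ℕ} {R : ℕ}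
    (A : (n : ι) → Matrix (Fin (I n)) (Fin R) ℝ) : ((n : ι) → Fin (I n)) → ℝ :=
  ∑ r : Fin R, outerProd (fun n iₙ => A n iₙ r)

theorem stmt16 {N R : ℕ} {I : Fin N → ℕ}
    (A : (n : Fin N) → Matrix (Fin (I n)) (Fin R) ℝ) :
    (∑ i : (n : Fin N) → Fin (I n), kruskal A i ^ 2)
        = dotProduct (fun _ => (1 : ℝ))
            ((hadPi (fun n => (A n)ᵀ * A n)).mulVec (fun _ => (1 : ℝ)))
    ∧ (∑ i : (n : Fin N) → Fin (I n), kruskal A i ^ 2)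
        = ∑ r : Fin R, ∑ s : Fin R, ∏ n, ((A n)ᵀ * A n) r s := by
  have key : (∑ i : (n : Fin N) → Fin (I n), kruskal A i ^ 2)
      = ∑ r : Fin R, ∑ s : Fin R, ∏ n, ((A n)ᵀ * A n) r s := by
    have : ∀ i, kruskal A i ^ 2
        = ∑ r : Fin R, ∑ s : Fin R, ∏ n, (A n (i n) r * A n (i n) s) := by
      intro i
      simp only [kruskal, outerProd, Finset.sum_apply, sq, Finset.sum_mul_sum,
        ← Finset.prod_mul_distrib]
    rw [Finset.sum_congr rfl (fun i _ => this i)]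
    rw [Finset.sum_comm]
    refine Finset.sum_congr rfl fun r _ => ?_
    rw [Finset.sum_comm]
    refine Finset.sum_congr rfl fun s _ => ?_
    have h : ∀ n, ((A n)ᵀ * A n) r s = ∑ x, A n x r * A n x s := by
      intro n; simp [Matrix.mul_apply]
    simp_rw [h]
    rw [Finset.prod_univ_sum, Fintype.piFinset_univ]
  refine ⟨?_, key⟩
  rw [key]
  simp [dotProduct, Matrix.mulVec, hadPi]
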